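/- Let H = ℂ × ℂ with the product (t,s)(t',s') = (t + t', s + e^t s'), and consider the subgroups G₁ = {(g, 0) : g ∈ ℂ} and G₂ = {(s, e^s − 1) : s ∈ ℂ}. Then G₁ ∩ G₂ = {(2πin, 0) : n ∈ ℤ}, and this set equals the center Z(H) of H. -/

import Mathlib

/-- In `H = ℂ × ℂ` with product `(t,s)(t',s') = (t+t', s + eᵗs')`, the subgroups
`G₁ = {(g,0)}` and `G₂ = {(s, eˢ − 1)}` intersect exactly in
`{(2πin, 0) : n ∈ ℤ}`, which is also the center of `H`. -/
theorem simply_connected_cover_intersection_is_center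
    (mul : ℂ × ℂ → ℂ × ℂ → ℂ × ℂ)
    (hmul : ∀ t s t' s' : ℂ, mul (t, s) (t', s') = (t + t', s + Complex.exp t * s'))
    (G1 G2 C : Set (ℂ × ℂ))
    (hG1 : G1 = {q | ∃ g : ℂ, q = (g, 0)})
    (hG2 : G2 = {q | ∃ s : ℂ, q = (s, Complex.exp s - 1)})
    (hC : C = {q | ∃ n : ℤ, q = (2 * (Real.pi : ℂ) * Complex.I * (n : ℂ), 0)}) :
    G1 ∩ G2 = C ∧ {z | ∀ q, mul z q = mul q z} = C := by
  subst hG1 hG2 hC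
  constructor
  · ext ⟨a, b⟩
    simp only [Set.mem_inter_iff, Set.mem_setOf_eq, Prod.mk.injEq]
    constructor
    · rintro ⟨⟨g, hg1, hg2⟩, s, hs1, hs2⟩
      have h1 : Complex.exp s = 1 := by linear_combination hg2 - hs2
      rw [Complex.exp_eq_one_iff] at h1
      obtain ⟨n, hn⟩ := h1
      exact ⟨n, by rw [hs1, hn]; ring, hg2⟩
    · rintro ⟨n, h1, h2⟩
      refine ⟨⟨a, rfl, h2⟩, a, rfl, ?_⟩
      rw [h2, h1, eq_comm, sub_eq_zero]
      rw [Complex.exp_eq_one_iff]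
      exact ⟨n, by ring⟩
  · ext ⟨a, b⟩
    simp only [Set.mem_setOf_eq]
    constructor
    · intro h
      have key : ∀ t s : ℂ, (Complex.exp a - 1) * s = (Complex.exp t - 1) * b := by
        intro t s
        have := h (t, s)
        rw [hmul, hmul] at this
        have h2 := congrArg Prod.snd this
        simp only at h2
        linear_combination h2
      have ha : Complex.exp a = 1 := by
        have := key 0 1
        simpa [Complex.exp_zero, sub_eq_zero] using this
      have hb : b = 0 := by
        have := key 1 0
        have hne : Complex.exp 1 - 1 ≠ 0 := by
          rw [sub_ne_zero]
          intro hc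
          have habs : Real.exp 1 = 1 := by
            have := congrArg norm hc
            rwa [Complex.norm_exp, Complex.one_re, norm_one] at this
          rw [Real.exp_eq_one_iff] at habs
          exact one_ne_zero habs
        field_simp at this
        have h0 : (Complex.exp 1 - 1) * b = 0 := by linear_combination -this
        exact (mul_eq_zero.mp h0).resolve_left hne
      rw [Complex.exp_eq_one_iff] at ha
      obtain ⟨n, hn⟩ := ha
      exact ⟨n, by rw [hn, hb]; norm_num; ring⟩
    · rintro ⟨n, hq⟩ ⟨t, s⟩
      have hq1 : a = 2 * (Real.pi : ℂ) * Complex.I * n := (Prod.mk.injEq _ _ _ _ ▸ hq).1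
      have hq2 : b = 0 := (Prod.mk.injEq _ _ _ _ ▸ hq).2
      have ha : Complex.exp a = 1 := by
        rw [Complex.exp_eq_one_iff]; exact ⟨n, by rw [hq1]; ring⟩
      rw [hmul, hmul, ha, hq2]
      simp [add_comm]
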